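/- Let R be a finite ring. Then the zero-divisor graph Γ(R) is isomorphic to the complete graph K₂ on two vertices if and only if R is isomorphic to one of the following four rings: N_{0,3}, ℤ₉, ℤ₃[x]/(x²), ℤ₂ × ℤ₂. -/

import Mathlib

/-- An element of a ring is a (one-sided or two-sided) zero-divisor: it is nonzero and
kills some nonzero element on the left or on the right. -/
def IsZD {R : Type*} [NonUnitalNonAssocRing R] (x : R) : Prop :=
  x ≠ 0 ∧ ∃ y : R, y ≠ 0 ∧ (x * y = 0 ∨ y * x = 0)

/-- The zero-divisor graph `Γ(R)` of a ring `R`: vertices are the nonzero zero-divisors,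
and distinct vertices `x`, `y` are adjacent iff `x*y = 0` or `y*x = 0`. -/
def zdvGraph (R : Type*) [NonUnitalNonAssocRing R] :
    SimpleGraph {x : R // IsZD x} where
  Adj a b := a ≠ b ∧ ((a : R) * (b : R) = 0 ∨ (b : R) * (a : R) = 0)
  symm := by
    constructor
    rintro a b ⟨hne, h⟩
    exact ⟨hne.symm, h.symm⟩
  loopless := by
    constructor
    rintro a ⟨hne, -⟩
    exact hne rfl

/-- A variety of (associative, not necessarily unital or commutative) rings: a class of
rings closed under isomorphisms, subrings, homomorphic images and arbitrary products. -/
structure RingVariety : Type 1 where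
  mem : ∀ (R : Type) [NonUnitalRing R], Prop
  closed_iso : ∀ (R S : Type) [NonUnitalRing R] [NonUnitalRing S],
    (R ≃+* S) → mem R → mem S
  closed_subring : ∀ (R : Type) [NonUnitalRing R] (S : NonUnitalSubring R),
    mem R → mem S
  closed_image : ∀ (R S : Type) [NonUnitalRing R] [NonUnitalRing S] (f : R →ₙ+* S),
    Function.Surjective f → mem R → mem S
  closed_prod : ∀ (ι : Type) (R : ι → Type) [∀ i, NonUnitalRing (R i)],
    (∀ i, mem (R i)) → mem (∀ i, R i)

/-- A variety is graph-determined if any two finite rings in it with isomorphic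
zero-divisor graphs are isomorphic. -/
def GraphDetermined (M : RingVariety) : Prop :=
  ∀ (R S : Type) [NonUnitalRing R] [NonUnitalRing S], Finite R → Finite S →
    M.mem R → M.mem S →
    Nonempty (zdvGraph R ≃g zdvGraph S) → Nonempty (R ≃+* S)

/-- The null ring on an abelian group `A`: all products are zero. -/
def NullRing (A : Type*) := A

instance {A : Type*} [AddCommGroup A] : NonUnitalRing (NullRing A) :=
  { (inferInstance : AddCommGroup A) with
    mul := fun _ _ => (0 : A)
    left_distrib := fun _ _ _ => (add_zero (0 : A)).symm
    right_distrib := fun _ _ _ => (add_zero (0 : A)).symm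
    zero_mul := fun _ => rfl
    mul_zero := fun _ => rfl
    mul_assoc := fun _ _ _ => rfl }

/-- the data of "exactly two zero divisors, adjacent" -/
def ZDPair (R : Type*) [NonUnitalNonAssocRing R] (a b : R) : Prop :=
  IsZD a ∧ IsZD b ∧ a ≠ b ∧ (a * b = 0 ∨ b * a = 0) ∧ ∀ z : R, IsZD z → z = a ∨ z = b

lemma zdPair_to_iso {R : Type*} [NonUnitalNonAssocRing R] {a b : R} (h : ZDPair R a b) :
    Nonempty (zdvGraph R ≃g SimpleGraph.completeGraph (Fin 2)) := by
  classical
  obtain ⟨ha, hb, hab, hadj, hcover⟩ := h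
  refine ⟨⟨⟨fun v => if v.1 = a then 0 else 1,
      fun i => if i = 0 then ⟨a, ha⟩ else ⟨b, hb⟩, ?_, ?_⟩, ?_⟩⟩
  · rintro ⟨v, hv⟩
    rcases hcover v hv with rfl | rfl
    · simp
    · simp [hab.symm, Ne.symm hab]
  · intro i
    fin_cases i <;> simp [hab.symm, Ne.symm hab]
  · rintro ⟨v, hv⟩ ⟨w, hw⟩
    simp only [Equiv.coe_fn_mk, SimpleGraph.completeGraph, SimpleGraph.top_adj]
    constructor
    · intro hne
      rcases hcover v hv with rfl | rfl <;> rcases hcover w hw with rfl | rfl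
      · simp at hne
      · exact ⟨by simpa using hab, hadj⟩
      · exact ⟨by simpa using Ne.symm hab, hadj.symm⟩
      · simp at hne
    · rintro ⟨hne, -⟩
      rcases hcover v hv with rfl | rfl <;> rcases hcover w hw with rfl | rfl
      · exact absurd (Subtype.ext rfl) hne
      · simp [hab.symm, Ne.symm hab]
      · simp [hab.symm, Ne.symm hab]
      · exact absurd (Subtype.ext rfl) hne

lemma iso_to_zdPair {R : Type*} [NonUnitalNonAssocRing R]
    (h : Nonempty (zdvGraph R ≃g SimpleGraph.completeGraph (Fin 2))) :
    ∃ a b : R, ZDPair R a b := by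
  obtain ⟨f⟩ := h
  refine ⟨(f.symm 0).1, (f.symm 1).1, (f.symm 0).2, (f.symm 1).2, ?_, ?_, ?_⟩
  · intro hv
    have : f.symm 0 = f.symm 1 := Subtype.ext hv
    simpa using congrArg f this
  · have : (zdvGraph R).Adj (f.symm 0) (f.symm 1) := by
      rw [← f.map_rel_iff]
      simp
    exact this.2
  · intro z hz
    have h2 : f ⟨z, hz⟩ = 0 ∨ f ⟨z, hz⟩ = 1 := by
      generalize f ⟨z, hz⟩ = i
      fin_cases i <;> simp
    rcases h2 with h2 | h2
    · left
      have := congrArg f.symm h2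
      simp at this
      exact congrArg Subtype.val this
    · right
      have := congrArg f.symm h2
      simp at this
      exact congrArg Subtype.val this

lemma isZD_equiv {R S : Type*} [NonUnitalNonAssocRing R] [NonUnitalNonAssocRing S]
    (e : R ≃+* S) {x : R} (h : IsZD x) : IsZD (e x) := by
  obtain ⟨hx, y, hy, hxy⟩ := h
  refine ⟨by simpa using hx, e y, by simpa using hy, ?_⟩
  rcases hxy with h' | h'
  · left; rw [← map_mul, h', map_zero]
  · right; rw [← map_mul, h', map_zero]

lemma zdPair_transfer {R S : Type*} [NonUnitalNonAssocRing R] [NonUnitalNonAssocRing S]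
    (e : R ≃+* S) {a b : S} (h : ZDPair S a b) : ZDPair R (e.symm a) (e.symm b) := by
  obtain ⟨ha, hb, hab, hadj, hcover⟩ := h
  refine ⟨isZD_equiv e.symm ha, isZD_equiv e.symm hb, fun hh => hab (by simpa using congrArg e hh),
    ?_, ?_⟩
  · rcases hadj with h' | h'
    · left; rw [← map_mul, h', map_zero]
    · right; rw [← map_mul, h', map_zero]
  · intro z hz
    rcases hcover (e z) (isZD_equiv e hz) with h' | h'
    · left; simpa using congrArg e.symm h'
    · right; simpa using congrArg e.symm h'

instance : DecidableEq (DualNumber (ZMod 3)) := inferInstanceAs (DecidableEq (ZMod 3 × ZMod 3))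
instance : Fintype (DualNumber (ZMod 3)) := inferInstanceAs (Fintype (ZMod 3 × ZMod 3))
instance : DecidableEq (NullRing (ZMod 3)) := inferInstanceAs (DecidableEq (ZMod 3))
instance : Fintype (NullRing (ZMod 3)) := inferInstanceAs (Fintype (ZMod 3))

def nr3 (a : ZMod 3) : NullRing (ZMod 3) := a

lemma zdPair_zmod9 : ZDPair (ZMod 9) 3 6 := by unfold ZDPair IsZD; decide
lemma zdPair_z2z2 : ZDPair (ZMod 2 × ZMod 2) (1, 0) (0, 1) := by unfold ZDPair IsZD; decide
lemma zdPair_dual : ZDPair (DualNumber (ZMod 3)) DualNumber.eps (2 * DualNumber.eps) := by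
  unfold ZDPair IsZD; decide
lemma zdPair_null : ZDPair (NullRing (ZMod 3)) (nr3 1) (nr3 2) := by unfold ZDPair IsZD; decide

open Polynomial

noncomputable def evalDual : Polynomial (ZMod 3) →+* DualNumber (ZMod 3) :=
  (Polynomial.aeval (DualNumber.eps : DualNumber (ZMod 3))).toRingHom

lemma evalDual_apply (p : Polynomial (ZMod 3)) :
    evalDual p = ⟨p.coeff 0, p.coeff 1⟩ := by
  show Polynomial.aeval _ p = _
  induction p using Polynomial.induction_on' with
  | add p q hp hq =>
      rw [map_add, hp, hq]
      ext <;> rfl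
  | monomial n a =>
      rw [aeval_monomial, TrivSqZeroExt.algebraMap_eq_inl']
      match n with
      | 0 => ext <;> simp
      | 1 => ext <;> simp [coeff_monomial]
      | (k+2) =>
          have : (DualNumber.eps : DualNumber (ZMod 3)) ^ (k + 2) = 0 := by
            rw [pow_add, pow_two, DualNumber.eps_mul_eps, mul_zero]
          rw [this, mul_zero]
          ext <;> simp [coeff_monomial]

lemma evalDual_X2 : evalDual (X ^ 2) = 0 := by
  rw [evalDual_apply]
  have h0 : (X ^ 2 : Polynomial (ZMod 3)).coeff 0 = 0 := by simp [coeff_X_pow]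
  have h1 : (X ^ 2 : Polynomial (ZMod 3)).coeff 1 = 0 := by simp [coeff_X_pow]
  rw [h0, h1]
  rfl

lemma evalDual_surj : Function.Surjective evalDual := by
  intro z
  refine ⟨C z.fst + C z.snd * X, ?_⟩
  rw [evalDual_apply]
  cases z
  simp [coeff_add, coeff_C, coeff_C_mul, coeff_X]
  rfl

lemma ker_evalDual : RingHom.ker evalDual = Ideal.span {(X : Polynomial (ZMod 3)) ^ 2} := by
  ext p
  rw [RingHom.mem_ker, Ideal.mem_span_singleton]
  constructor
  · intro hp
    have hmon : Monic ((X : Polynomial (ZMod 3)) ^ 2) := (monic_X.pow 2)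
    have hdiv := p.modByMonic_add_div (X ^ 2)
    have hdeg : (p %ₘ X ^ 2).degree < 2 := by
      simpa using degree_modByMonic_lt p hmon
    have h0 : evalDual (p %ₘ X ^ 2) = 0 := by
      have h2 : evalDual (X ^ 2 * (p /ₘ X ^ 2)) = 0 := by
        rw [map_mul, evalDual_X2, zero_mul]
      calc evalDual (p %ₘ X ^ 2) = evalDual (p %ₘ X ^ 2 + X ^ 2 * (p /ₘ X ^ 2)) := by
            rw [map_add, h2, add_zero]
        _ = evalDual p := by rw [hdiv]
        _ = 0 := hp
    rw [evalDual_apply] at h0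
    have hc0 : (p %ₘ X ^ 2).coeff 0 = 0 := congrArg TrivSqZeroExt.fst h0
    have hc1 : (p %ₘ X ^ 2).coeff 1 = 0 := congrArg TrivSqZeroExt.snd h0
    have hrem : p %ₘ X ^ 2 = 0 := by
      have heq := (p %ₘ X ^ 2).eq_X_add_C_of_degree_le_one (by
        exact Order.le_of_lt_succ (by exact hdeg))
      rw [heq, hc0, hc1]
      simp
    refine ⟨p /ₘ X ^ 2, ?_⟩
    nth_rewrite 1 [← hdiv]
    rw [hrem, zero_add]
  · rintro ⟨q, rfl⟩
    rw [map_mul, evalDual_X2, zero_mul]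

noncomputable def polyQuotEquivDual :
    (Polynomial (ZMod 3) ⧸ Ideal.span {(Polynomial.X : Polynomial (ZMod 3)) ^ 2}) ≃+*
      DualNumber (ZMod 3) :=
  (Ideal.quotEquivOfEq ker_evalDual.symm).trans
    (RingHom.quotientKerEquivOfSurjective evalDual_surj)

noncomputable def zline (n : ℕ) {R : Type*} [AddCommGroup R] (g : R) (h : (n : ℤ) • g = 0) :
    ZMod n →+ R :=
  ZMod.lift n ⟨zmultiplesHom R g, h⟩
lemma zline_coe (n : ℕ) {R : Type*} [AddCommGroup R] (g : R) (h : (n : ℤ) • g = 0) (t : ℤ) :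
    zline n g h ((t : ℤ) : ZMod n) = t • g :=
  ZMod.lift_coe n _ t
lemma key_dvd {R : Type*} [AddCommGroup R] {g : R} (n : ℕ) (hpos : 0 < n)
    (hn : (n : ℤ) • g = 0) (hd : ∀ d : ℕ, d ∣ n → d < n → (d : ℤ) • g ≠ 0)
    {t : ℤ} (ht : t • g = 0) : (n : ℤ) ∣ t := by
  set D : ℕ := Int.gcd (n : ℤ) t with hD
  have hDn : D ∣ n := by exact_mod_cast Int.gcd_dvd_left (a := (n:ℤ)) (b := t)
  have hDg : (D : ℤ) • g = 0 := by
    have hbez := Int.gcd_eq_gcd_ab (n : ℤ) t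
    rw [hbez, add_smul, mul_comm, mul_smul, mul_comm, mul_smul, hn, ht, smul_zero, smul_zero,
      add_zero]
  have hDeq : D = n := by
    by_contra hne
    exact hd D hDn (lt_of_le_of_ne (Nat.le_of_dvd hpos hDn) hne) hDg
  have := Int.gcd_dvd_right (a := (n:ℤ)) (b := t)
  rw [← hD, hDeq] at this
  exact this

lemma null_mul {A : Type*} [AddCommGroup A] (a b : NullRing A) : a * b = 0 := rfl

section Builders
variable {R : Type*} [NonUnitalRing R]

lemma dvdn_aux {g : R} (n : ℕ) (hn : n = 2 ∨ n = 3) (hg : g ≠ 0) :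
    ∀ d : ℕ, d ∣ n → d < n → (d : ℤ) • g ≠ 0 := by
  rcases hn with rfl | rfl <;>
    · intro d hdvd hlt
      interval_cases d <;> first | omega | simpa using hg

lemma buildNull {x : R} (hx0 : x ≠ 0) (h3x : x + x + x = 0)
    (hall : ∀ s : R, s = 0 ∨ s = x ∨ s = -x) (hmul0 : ∀ a b : R, a * b = 0) :
    Nonempty (R ≃+* NullRing (ZMod 3)) := by
  have hz3x : (3 : ℤ) • x = 0 := by
    rw [show (3:ℤ) = 1 + 1 + 1 by norm_num, add_smul, add_smul, one_smul]; exact h3x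
  have hnegx : -x = x + x := by rw [neg_eq_iff_add_eq_zero]; rw [← h3x]; abel
  set L : ZMod 3 →+ R := zline 3 x hz3x with hL
  have hinj : Function.Injective L := by
    rw [injective_iff_map_eq_zero]
    intro a ha
    obtain ⟨t, rfl⟩ := ZMod.intCast_surjective a
    rw [hL, zline_coe] at ha
    have h3t := key_dvd 3 (by norm_num) hz3x (dvdn_aux 3 (Or.inr rfl) hx0) ha
    exact (ZMod.intCast_zmod_eq_zero_iff_dvd t 3).mpr (by exact_mod_cast h3t)
  have hsurj : Function.Surjective L := by
    intro s
    rcases hall s with rfl | rfl | rfl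
    · exact ⟨0, map_zero L⟩
    · exact ⟨((1:ℤ) : ZMod 3), by rw [hL, zline_coe, one_smul]⟩
    · exact ⟨((2:ℤ) : ZMod 3), by rw [hL, zline_coe, two_smul, hnegx]⟩
  have hbij : Function.Bijective (fun a : NullRing (ZMod 3) => L a) := ⟨hinj, hsurj⟩
  refine ⟨(RingEquiv.mk (Equiv.ofBijective _ hbij) ?_ ?_).symm⟩
  · intro a b
    rw [null_mul a b, hmul0]
    exact map_zero L
  · intro a b
    exact L.map_add a b

lemma buildDual {x e : R} (hx0 : x ≠ 0) (h3x : x + x + x = 0) (hxx : x * x = 0)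
    (hee : e * e = e) (hex : e * x = x) (hxe : x * e = x) (he3 : e + e + e = 0)
    (hcov : ∀ s : R, (s = 0 ∨ s = x ∨ s = -x) ∨ (s - e = 0 ∨ s - e = x ∨ s - e = -x) ∨
      (s + e = 0 ∨ s + e = x ∨ s + e = -x)) :
    Nonempty (R ≃+* DualNumber (ZMod 3)) := by
  have hz3x : (3 : ℤ) • x = 0 := by
    rw [show (3:ℤ) = 1 + 1 + 1 by norm_num, add_smul, add_smul, one_smul]; exact h3x
  have hz3e : (3 : ℤ) • e = 0 := by
    rw [show (3:ℤ) = 1 + 1 + 1 by norm_num, add_smul, add_smul, one_smul]; exact he3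
  have hnegx : -x = x + x := by rw [neg_eq_iff_add_eq_zero]; rw [← h3x]; abel
  have hnege : -e = e + e := by rw [neg_eq_iff_add_eq_zero]; rw [← he3]; abel
  set Lx : ZMod 3 →+ R := zline 3 x hz3x with hLx
  set Le : ZMod 3 →+ R := zline 3 e hz3e with hLe
  set F : DualNumber (ZMod 3) →+ R :=
    { toFun := fun p => Le p.fst + Lx p.snd
      map_zero' := by simp
      map_add' := by
        intro p q
        show Le (p + q).fst + Lx (p + q).snd = _
        rw [TrivSqZeroExt.fst_add, TrivSqZeroExt.snd_add, map_add, map_add]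
        exact add_add_add_comm _ _ _ _ } with hF
  have hFc : ∀ i j : ℤ, F (⟨(i : ZMod 3), (j : ZMod 3)⟩ : DualNumber (ZMod 3)) =
      i • e + j • x := by
    intro i j
    show Le ((i : ℤ) : ZMod 3) + Lx ((j : ℤ) : ZMod 3) = _
    rw [hLe, hLx, zline_coe, zline_coe]
  have hmulpair : ∀ a b c d : ZMod 3, (⟨a, b⟩ * ⟨c, d⟩ : DualNumber (ZMod 3)) =
      (⟨a * c, a * d + b * c⟩ : DualNumber (ZMod 3)) := by intro a b c d; rfl
  have hmul : ∀ p q : DualNumber (ZMod 3), F (p * q) = F p * F q := by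
    intro p q
    obtain ⟨a, b⟩ := p
    obtain ⟨c, d⟩ := q
    obtain ⟨t, rfl⟩ := ZMod.intCast_surjective a
    obtain ⟨w, rfl⟩ := ZMod.intCast_surjective b
    obtain ⟨u, rfl⟩ := ZMod.intCast_surjective c
    obtain ⟨v, rfl⟩ := ZMod.intCast_surjective d
    rw [hmulpair]
    have h1 : (((t:ℤ):ZMod 3) * ((u:ℤ):ZMod 3)) = ((t * u : ℤ) : ZMod 3) := by push_cast; ring
    have h2 : (((t:ℤ):ZMod 3) * ((v:ℤ):ZMod 3) + ((w:ℤ) : ZMod 3) * ((u:ℤ):ZMod 3)) =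
        ((t * v + w * u : ℤ) : ZMod 3) := by push_cast; ring
    rw [h1, h2, hFc, hFc, hFc, mul_add, add_mul, add_mul, smul_mul_smul_comm,
      smul_mul_smul_comm, smul_mul_smul_comm, smul_mul_smul_comm, hee, hex, hxe, hxx,
      smul_zero, add_smul, add_zero]
    abel
  have hinj : Function.Injective F := by
    rw [injective_iff_map_eq_zero]
    intro p hp
    obtain ⟨a, b⟩ := p
    obtain ⟨t, rfl⟩ := ZMod.intCast_surjective a
    obtain ⟨w, rfl⟩ := ZMod.intCast_surjective b
    rw [hFc] at hp
    have h0 : x * (t • e + w • x) = 0 := by rw [hp, mul_zero]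
    rw [mul_add, mul_smul_comm, mul_smul_comm, hxe, hxx, smul_zero, add_zero] at h0
    have ht3 := key_dvd 3 (by norm_num) hz3x (dvdn_aux 3 (Or.inr rfl) hx0) h0
    have hte : t • e = 0 := by
      obtain ⟨k, hk⟩ := ht3
      have h3e : ((3:ℕ):ℤ) • e = 0 := by exact_mod_cast hz3e
      rw [hk, mul_comm, mul_smul, h3e, smul_zero]
    rw [hte, zero_add] at hp
    have hw3 := key_dvd 3 (by norm_num) hz3x (dvdn_aux 3 (Or.inr rfl) hx0) hp
    have e1 : ((t:ℤ) : ZMod 3) = 0 := (ZMod.intCast_zmod_eq_zero_iff_dvd t 3).mpr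
      (by exact_mod_cast ht3)
    have e2 : ((w:ℤ) : ZMod 3) = 0 := (ZMod.intCast_zmod_eq_zero_iff_dvd w 3).mpr
      (by exact_mod_cast hw3)
    rw [e1, e2]
    rfl
  have hsurj : Function.Surjective F := by
    intro s
    have h2x' : ((2:ℤ)) • x = x + x := two_smul ℤ x
    have h2e' : ((2:ℤ)) • e = e + e := two_smul ℤ e
    rcases hcov s with (rfl | rfl | rfl) | (h | h | h) | (h | h | h)
    · exact ⟨0, map_zero F⟩
    · exact ⟨⟨((0:ℤ):ZMod 3), ((1:ℤ):ZMod 3)⟩, by rw [hFc, zero_smul, one_smul, zero_add]⟩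
    · exact ⟨⟨((0:ℤ):ZMod 3), ((2:ℤ):ZMod 3)⟩, by
        rw [hFc, zero_smul, h2x', zero_add, hnegx]⟩
    · exact ⟨⟨((1:ℤ):ZMod 3), ((0:ℤ):ZMod 3)⟩, by
        rw [hFc, one_smul, zero_smul, add_zero, (sub_eq_zero.mp h).symm]⟩
    · refine ⟨⟨((1:ℤ):ZMod 3), ((1:ℤ):ZMod 3)⟩, ?_⟩
      rw [hFc, one_smul, one_smul]
      have : s = x + e := by rw [sub_eq_iff_eq_add] at h; exact h
      rw [this]; abel
    · refine ⟨⟨((1:ℤ):ZMod 3), ((2:ℤ):ZMod 3)⟩, ?_⟩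
      rw [hFc, one_smul, h2x']
      have : s = -x + e := by rw [sub_eq_iff_eq_add] at h; exact h
      rw [this, hnegx]; abel
    · refine ⟨⟨((2:ℤ):ZMod 3), ((0:ℤ):ZMod 3)⟩, ?_⟩
      rw [hFc, h2e', zero_smul, add_zero]
      have : s = -e := eq_neg_of_add_eq_zero_left h
      rw [this, hnege]
    · refine ⟨⟨((2:ℤ):ZMod 3), ((1:ℤ):ZMod 3)⟩, ?_⟩
      rw [hFc, h2e', one_smul]
      have : s = x - e := by rw [← h]; abel
      rw [this, sub_eq_add_neg, hnege]; abel
    · refine ⟨⟨((2:ℤ):ZMod 3), ((2:ℤ):ZMod 3)⟩, ?_⟩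
      rw [hFc, h2e', h2x']
      have : s = -x - e := by rw [← h]; abel
      rw [this, sub_eq_add_neg, hnege, hnegx]; abel
  exact ⟨(RingEquiv.mk (Equiv.ofBijective F ⟨hinj, hsurj⟩) (fun a b => hmul a b)
    (fun a b => F.map_add a b)).symm⟩

lemma build2 {x y : R} (hx0 : x ≠ 0) (hy0 : y ≠ 0) (h2x : x + x = 0) (h2y : y + y = 0)
    (hxx : x * x = x) (hyy : y * y = y) (hxy : x * y = 0) (hyx : y * x = 0)
    (hcov : ∀ s : R, s = 0 ∨ s = x ∨ s = y ∨ s = x + y) :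
    Nonempty (R ≃+* (ZMod 2 × ZMod 2)) := by
  have hz2x : (2 : ℤ) • x = 0 := by rw [two_smul]; exact h2x
  have hz2y : (2 : ℤ) • y = 0 := by rw [two_smul]; exact h2y
  set Lx : ZMod 2 →+ R := zline 2 x hz2x with hLx
  set Ly : ZMod 2 →+ R := zline 2 y hz2y with hLy
  set F : ZMod 2 × ZMod 2 →+ R :=
    { toFun := fun p => Lx p.1 + Ly p.2
      map_zero' := by simp
      map_add' := by
        intro p q
        show Lx (p.1 + q.1) + Ly (p.2 + q.2) = _
        rw [map_add, map_add]
        exact add_add_add_comm _ _ _ _ } with hF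
  have hFc : ∀ i j : ℤ, F (((i:ℤ) : ZMod 2), ((j:ℤ) : ZMod 2)) = i • x + j • y := by
    intro i j
    show Lx ((i : ℤ) : ZMod 2) + Ly ((j : ℤ) : ZMod 2) = _
    rw [hLx, hLy, zline_coe, zline_coe]
  have hmul : ∀ p q : ZMod 2 × ZMod 2, F (p * q) = F p * F q := by
    intro p q
    obtain ⟨a, b⟩ := p
    obtain ⟨c, d⟩ := q
    obtain ⟨t, rfl⟩ := ZMod.intCast_surjective a
    obtain ⟨w, rfl⟩ := ZMod.intCast_surjective b
    obtain ⟨u, rfl⟩ := ZMod.intCast_surjective c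
    obtain ⟨v, rfl⟩ := ZMod.intCast_surjective d
    have h1 : (((t:ℤ):ZMod 2), ((w:ℤ):ZMod 2)) * (((u:ℤ):ZMod 2), ((v:ℤ):ZMod 2)) =
        (((t*u : ℤ):ZMod 2), ((w*v:ℤ):ZMod 2)) := by
      rw [Prod.mk_mul_mk]; simp only [Prod.mk.injEq]; constructor <;> push_cast <;> ring
    rw [h1, hFc, hFc, hFc, mul_add, add_mul, add_mul, smul_mul_smul_comm,
      smul_mul_smul_comm, smul_mul_smul_comm, smul_mul_smul_comm, hxx, hyy, hxy, hyx,
      smul_zero, smul_zero, add_zero, zero_add]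
  have hinj : Function.Injective F := by
    rw [injective_iff_map_eq_zero]
    intro p hp
    obtain ⟨a, b⟩ := p
    obtain ⟨t, rfl⟩ := ZMod.intCast_surjective a
    obtain ⟨w, rfl⟩ := ZMod.intCast_surjective b
    rw [hFc] at hp
    have h0 : x * (t • x + w • y) = 0 := by rw [hp, mul_zero]
    rw [mul_add, mul_smul_comm, mul_smul_comm, hxx, hxy, smul_zero, add_zero] at h0
    have h0' : y * (t • x + w • y) = 0 := by rw [hp, mul_zero]
    rw [mul_add, mul_smul_comm, mul_smul_comm, hyy, hyx, smul_zero, zero_add] at h0'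
    have ht := key_dvd 2 (by norm_num) hz2x (dvdn_aux 2 (Or.inl rfl) hx0) h0
    have hw := key_dvd 2 (by norm_num) hz2y (dvdn_aux 2 (Or.inl rfl) hy0) h0'
    have e1 : ((t:ℤ) : ZMod 2) = 0 := (ZMod.intCast_zmod_eq_zero_iff_dvd t 2).mpr
      (by exact_mod_cast ht)
    have e2 : ((w:ℤ) : ZMod 2) = 0 := (ZMod.intCast_zmod_eq_zero_iff_dvd w 2).mpr
      (by exact_mod_cast hw)
    rw [e1, e2]
    rfl
  have hsurj : Function.Surjective F := by
    intro s
    rcases hcov s with rfl | rfl | rfl | rfl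
    · exact ⟨0, map_zero F⟩
    · exact ⟨(((1:ℤ):ZMod 2), ((0:ℤ):ZMod 2)), by rw [hFc, one_smul, zero_smul, add_zero]⟩
    · exact ⟨(((0:ℤ):ZMod 2), ((1:ℤ):ZMod 2)), by rw [hFc, one_smul, zero_smul, zero_add]⟩
    · exact ⟨(((1:ℤ):ZMod 2), ((1:ℤ):ZMod 2)), by rw [hFc, one_smul, one_smul]⟩
  exact ⟨(RingEquiv.mk (Equiv.ofBijective F ⟨hinj, hsurj⟩) (fun a b => hmul a b)
    (fun a b => F.map_add a b)).symm⟩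

lemma buildZ9 {R : Type*} [NonUnitalRing R] (r : R) (m c : ℤ)
    (hm : r * r = m • r) (hc : m ^ 3 = 9 * c + 1) (h9 : (9 : ℤ) • r = 0)
    (h3 : (3 : ℤ) • r ≠ 0) (h1 : r ≠ 0) (hcov : ∀ s : R, ∃ w : ℤ, s = w • r) :
    Nonempty (R ≃+* ZMod 9) := by
  have hdvd : ∀ t : ℤ, t • r = 0 → (9 : ℤ) ∣ t := by
    intro t ht
    refine key_dvd 9 (by norm_num) h9 ?_ ht
    intro d hdn hlt
    have hle : d ≤ 9 := Nat.le_of_dvd (by norm_num) hdn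
    interval_cases d <;> simp_all <;> omega
  have hmod : ∀ a k : ℤ, (a + 9 * k) • r = a • r := by
    intro a k
    rw [add_smul, mul_comm, mul_smul, h9, smul_zero, add_zero]
  have h90 : (9 : ℤ) • ((m ^ 2) • r) = 0 := by
    rw [smul_smul, mul_comm, mul_smul, h9, smul_zero]
  set L : ZMod 9 →+ R := zline 9 ((m ^ 2) • r) h90 with hL
  have hLcoe : ∀ t : ℤ, L ((t : ℤ) : ZMod 9) = (t * m ^ 2) • r := by
    intro t
    rw [hL, zline_coe, smul_smul]
  have hinj : Function.Injective L := by
    rw [injective_iff_map_eq_zero]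
    intro a ha
    obtain ⟨t, rfl⟩ := ZMod.intCast_surjective a
    rw [hLcoe] at ha
    have h9d : (9 : ℤ) ∣ t * m ^ 2 := hdvd _ ha
    have ht : (9 : ℤ) ∣ t := by
      have heq : t = m * (t * m ^ 2) - 9 * (t * c) := by linear_combination (-t) * hc
      rw [heq]
      exact dvd_sub (Dvd.dvd.mul_left h9d m) (Dvd.intro _ rfl)
    rwa [ZMod.intCast_zmod_eq_zero_iff_dvd]
  have hsurj : Function.Surjective L := by
    intro s
    obtain ⟨w, rfl⟩ := hcov s
    refine ⟨(((w * m : ℤ)) : ZMod 9), ?_⟩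
    rw [hLcoe]
    have : w * m * m ^ 2 = w + 9 * (w * c) := by linear_combination w * hc
    rw [this, hmod]
  have hmul : ∀ a b : ZMod 9, L (a * b) = L a * L b := by
    intro a b
    obtain ⟨t, rfl⟩ := ZMod.intCast_surjective a
    obtain ⟨s, rfl⟩ := ZMod.intCast_surjective b
    rw [← Int.cast_mul, hLcoe, hLcoe, hLcoe, smul_mul_smul_comm, hm, smul_smul]
    have : t * m ^ 2 * (s * m ^ 2) * m = t * s * m ^ 2 + 9 * (t * s * m ^ 2 * c) := by
      linear_combination (t * s * m ^ 2) * hc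
    rw [this, hmod]
  exact ⟨(RingEquiv.mk (Equiv.ofBijective L ⟨hinj, hsurj⟩) (fun a b => hmul a b)
    (fun a b => L.map_add a b)).symm⟩
end Builders


section Case1
variable {R : Type*} [NonUnitalRing R]

lemma toZ9 (r u : R) (hu0 : u ≠ 0) (h3u : (3:ℤ) • u = 0) (h3r : (3:ℤ) • r = u)
    (hr0 : r ≠ 0) (hnorm : r * r = r ∨ r * r = u + r ∨ r * r = -u + r)
    (hcovu : ∀ s : R, (s = 0 ∨ s = u ∨ s = -u) ∨ (s - r = 0 ∨ s - r = u ∨ s - r = -u) ∨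
      (s + r = 0 ∨ s + r = u ∨ s + r = -u)) : Nonempty (R ≃+* ZMod 9) := by
  have hneg3 : (-3:ℤ) • r = -u := by rw [neg_smul, h3r]
  have h9r : (9:ℤ) • r = 0 := by rw [show (9:ℤ) = 3*3 by norm_num, mul_smul, h3r]; exact h3u
  have h3rne : (3:ℤ) • r ≠ 0 := by rw [h3r]; exact hu0
  have hm1 : (-1:ℤ) • r = -r := by rw [neg_smul, one_smul]
  have h4 : (4:ℤ) • r = u + r := by
    rw [show (4:ℤ) = 3 + 1 by norm_num, add_smul, h3r, one_smul]
  have hm2 : (-2:ℤ) • r = -u + r := by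
    rw [show (-2:ℤ) = -3 + 1 by norm_num, add_smul, hneg3, one_smul]
  have h2 : (2:ℤ) • r = u - r := by
    rw [show (2:ℤ) = 3 + -1 by norm_num, add_smul, h3r, hm1, ← sub_eq_add_neg]
  have hm4 : (-4:ℤ) • r = -u - r := by
    rw [show (-4:ℤ) = -3 + -1 by norm_num, add_smul, hneg3, hm1, ← sub_eq_add_neg]
  obtain ⟨m, c, hm, hc⟩ : ∃ m c : ℤ, r * r = m • r ∧ m ^ 3 = 9 * c + 1 := by
    rcases hnorm with h | h | h
    · exact ⟨1, 0, by rw [one_smul]; exact h, by norm_num⟩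
    · exact ⟨4, 7, by rw [h4]; exact h, by norm_num⟩
    · exact ⟨-2, -1, by rw [hm2]; exact h, by norm_num⟩
  have hcovw : ∀ s : R, ∃ w : ℤ, s = w • r := by
    intro s
    rcases hcovu s with (h | h | h) | (h | h | h) | (h | h | h)
    · exact ⟨0, by rw [zero_smul]; exact h⟩
    · exact ⟨3, by rw [h3r]; exact h⟩
    · exact ⟨-3, by rw [hneg3]; exact h⟩
    · exact ⟨1, by rw [one_smul]; exact sub_eq_zero.mp h⟩
    · exact ⟨4, by rw [h4]; exact sub_eq_iff_eq_add.mp h⟩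
    · exact ⟨-2, by rw [hm2]; exact sub_eq_iff_eq_add.mp h⟩
    · exact ⟨-1, by rw [hm1]; exact eq_neg_of_add_eq_zero_left h⟩
    · exact ⟨2, by rw [h2]; exact eq_sub_of_add_eq h⟩
    · exact ⟨-4, by rw [hm4]; exact eq_sub_of_add_eq h⟩
  exact buildZ9 r m c hm hc h9r h3rne hr0 hcovw

lemma case1 (x : R) (hx0 : x ≠ 0) (h2x : x + x ≠ 0) (hx2 : x * x = 0)
    (hcov : ∀ z : R, IsZD z → z = x ∨ z = -x) :
    Nonempty (R ≃+* NullRing (ZMod 3)) ∨ Nonempty (R ≃+* ZMod 9) ∨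
      Nonempty (R ≃+* DualNumber (ZMod 3)) := by
  classical
  set A : R → Prop := fun z => z = 0 ∨ z = x ∨ z = -x with hA
  have hAx : A x := Or.inr (Or.inl rfl)
  have hAnx : A (-x) := Or.inr (Or.inr rfl)
  have hzd : ∀ z w : R, z ≠ 0 → w ≠ 0 → (z * w = 0 ∨ w * z = 0) → A z :=
    fun z w hz hw h => Or.inr (hcov z ⟨hz, w, hw, h⟩)
  have h3x : x + x + x = 0 := by
    have hsx : (x + x) * x = 0 := by rw [add_mul, hx2, add_zero]
    rcases hzd (x + x) x h2x hx0 (Or.inl hsx) with h | h | h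
    · exact absurd h h2x
    · exact absurd (add_eq_left.mp h) hx0
    · rw [h, neg_add_cancel]
  have hxx2 : x + x = -x := eq_neg_of_add_eq_zero_left h3x
  have hz3x : (3:ℤ) • x = 0 := by
    rw [show (3:ℤ) = 1 + 1 + 1 by norm_num, add_smul, add_smul, one_smul]; exact h3x
  have hA3 : ∀ a : R, A a → a + a + a = 0 := by
    rintro a (h | h | h) <;> rw [h]
    · rw [add_zero, add_zero]
    · exact h3x
    · rw [← neg_add, ← neg_add, h3x, neg_zero]
  have hAneg : ∀ a : R, A a → A (-a) := by
    rintro a (h | h | h) <;> rw [h]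
    · rw [neg_zero]; exact Or.inl rfl
    · exact hAnx
    · rw [neg_neg]; exact hAx
  have hAadd : ∀ a b : R, A a → A b → A (a + b) := by
    rintro a b (h | h | h) (h' | h' | h') <;> rw [h, h']
    · exact Or.inl (by rw [add_zero])
    · exact Or.inr (Or.inl (zero_add x))
    · exact Or.inr (Or.inr (zero_add _))
    · exact Or.inr (Or.inl (add_zero x))
    · exact Or.inr (Or.inr hxx2)
    · exact Or.inl (add_neg_cancel x)
    · exact Or.inr (Or.inr (add_zero _))
    · exact Or.inl (neg_add_cancel x)
    · exact Or.inr (Or.inl (by rw [← neg_add, hxx2, neg_neg]))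
  have hAmul : ∀ a b : R, A a → A b → a * b = 0 := by
    rintro a b (h | h | h) (h' | h' | h') <;> rw [h, h'] <;> simp [hx2]
  have hAxs : ∀ s : R, A (x * s) := by
    intro s
    by_cases h : x * s = 0
    · exact Or.inl h
    · exact hzd (x * s) x h hx0 (Or.inr (by rw [← mul_assoc, hx2, zero_mul]))
  have hAsx : ∀ s : R, A (s * x) := by
    intro s
    by_cases h : s * x = 0
    · exact Or.inl h
    · exact hzd (s * x) x h hx0 (Or.inl (by rw [mul_assoc, hx2, mul_zero]))
  have hcl : ∀ s t : R, ¬ A s → s * t = 0 → t = 0 := by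
    intro s t hs h
    by_contra ht
    exact hs (hzd s t (fun h0 => hs (Or.inl h0)) ht (Or.inl h))
  have hxs_ne : ∀ s : R, ¬ A s → x * s ≠ 0 := by
    intro s hs h
    exact hs (hzd s x (fun h0 => hs (Or.inl h0)) hx0 (Or.inr h))
  have hsx_ne : ∀ s : R, ¬ A s → s * x ≠ 0 := by
    intro s hs h
    exact hs (hzd s x (fun h0 => hs (Or.inl h0)) hx0 (Or.inl h))
  have hmem : ∀ u : R, x * u = 0 → A u := by
    intro u hu
    by_cases h : u = 0
    · exact Or.inl h
    · exact hzd u x h hx0 (Or.inr hu)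
  have hA3s : ∀ s : R, A (s + s + s) := by
    intro s
    have hx3s : x * (s + s + s) = 0 := by
      rw [mul_add, mul_add]
      exact hA3 (x * s) (hAxs s)
    exact hmem _ hx3s
  have hF4 : ∀ s t : R, ¬ A s → ¬ A t → A (s - t) ∨ A (s + t) := by
    intro s t hs ht
    have hxs := hAxs s
    have hxt := hAxs t
    rcases hxs with h1 | h1 | h1
    · exact absurd h1 (hxs_ne s hs)
    all_goals rcases hxt with h2 | h2 | h2
    · exact absurd h2 (hxs_ne t ht)
    · exact Or.inl (hmem _ (by rw [mul_sub, h1, h2, sub_self]))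
    · exact Or.inr (hmem _ (by rw [mul_add, h1, h2, add_neg_cancel]))
    · exact absurd h2 (hxs_ne t ht)
    · exact Or.inr (hmem _ (by rw [mul_add, h1, h2, neg_add_cancel]))
    · exact Or.inl (hmem _ (by rw [mul_sub, h1, h2, sub_self]))
  by_cases hall : ∀ s : R, A s
  · exact Or.inl (buildNull hx0 h3x hall (fun a b => hAmul a b (hall a) (hall b)))
  push_neg at hall
  obtain ⟨r0, hr0A⟩ := hall
  have hrr_not : ∀ r : R, ¬ A r → ¬ A (r * r) := by
    intro r hr hArr
    have hrne : r ≠ 0 := fun h0 => hr (Or.inl h0)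
    rcases hArr with h | h | h
    · exact hr (hzd r r hrne hrne (Or.inl h))
    · have hc : r * (r * x) = 0 := by rw [← mul_assoc, h, hx2]
      exact hsx_ne r hr (hcl r _ hr hc)
    · have hc : r * (r * x) = 0 := by rw [← mul_assoc, h, neg_mul, hx2, neg_zero]
      exact hsx_ne r hr (hcl r _ hr hc)
  obtain ⟨r, hr, hnorm⟩ : ∃ r : R, ¬ A r ∧ A (r * r - r) := by
    rcases hF4 (r0 * r0) r0 (hrr_not r0 hr0A) hr0A with h | h
    · exact ⟨r0, hr0A, h⟩
    · refine ⟨-r0, fun hA' => hr0A (by simpa using hAneg _ hA'), ?_⟩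
      rwa [neg_mul_neg, sub_neg_eq_add]
  have hrne : r ≠ 0 := fun h0 => hr (Or.inl h0)
  have hrx : r * x = x := by
    have hArx := hAsx r
    rcases hArx with h | h | h
    · exact absurd h (hsx_ne r hr)
    · exact h
    · exfalso
      have h1 : r * (r * x) = r * x := by
        rw [← mul_assoc]
        nth_rewrite 1 [← sub_add_cancel (r * r) r]
        rw [add_mul, hAmul _ x hnorm hAx, zero_add]
      rw [h, mul_neg, h, neg_neg] at h1
      exact h2x (eq_neg_iff_add_eq_zero.mp h1)
  have hxr : x * r = x := by
    have hAxr := hAxs r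
    rcases hAxr with h | h | h
    · exact absurd h (hxs_ne r hr)
    · exact h
    · exfalso
      have h1 : (x * r) * r = x * r := by
        rw [mul_assoc]
        nth_rewrite 1 [← sub_add_cancel (r * r) r]
        rw [mul_add, hAmul x _ hAx hnorm, zero_add]
      rw [h, neg_mul, h, neg_neg] at h1
      exact h2x (eq_neg_iff_add_eq_zero.mp h1)
  have hcovR : ∀ s : R, A s ∨ A (s - r) ∨ A (s + r) := by
    intro s
    by_cases hs : A s
    · exact Or.inl hs
    · exact Or.inr (hF4 s r hs hr)
  have hcove : ∀ e : R, A (r - e) → ∀ s : R, A s ∨ A (s - e) ∨ A (s + e) := by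
    intro e hre s
    rcases hcovR s with h | h | h
    · exact Or.inl h
    · refine Or.inr (Or.inl ?_)
      have heq : s - e = (s - r) + (r - e) := by abel
      rw [heq]
      exact hAadd _ _ h hre
    · refine Or.inr (Or.inr ?_)
      have heq : s + e = (s + r) - (r - e) := by abel
      rw [heq, sub_eq_add_neg]
      exact hAadd _ _ h (hAneg _ hre)
  rcases hA3s r with h3r | h3r | h3r
  -- 3r = 0 : dual numbers
  · refine Or.inr (Or.inr ?_)
    rcases hnorm with hb | hb | hb
    · -- e = r
      have hee : r * r = r := sub_eq_zero.mp hb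
      exact buildDual hx0 h3x hx2 hee hrx hxr h3r
        (hcove r (by rw [sub_self]; exact Or.inl rfl))
    · -- e = r - x
      have hrr : r * r = x + r := sub_eq_iff_eq_add.mp hb
      have hee : (r - x) * (r - x) = r - x := by
        rw [sub_mul, mul_sub, mul_sub, hrr, hrx, hxr, hx2]
        abel
      have hex : (r - x) * x = x := by rw [sub_mul, hrx, hx2, sub_zero]
      have hxe : x * (r - x) = x := by rw [mul_sub, hxr, hx2, sub_zero]
      have he3 : (r - x) + (r - x) + (r - x) = 0 := by
        have heq : (r - x) + (r - x) + (r - x) = (r + r + r) - (x + x + x) := by abel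
        rw [heq, h3r, h3x, sub_zero]
      exact buildDual hx0 h3x hx2 hee hex hxe he3
        (hcove (r - x) (by rw [sub_sub_cancel]; exact hAx))
    · -- e = r + x
      have hrr : r * r = -x + r := sub_eq_iff_eq_add.mp hb
      have hee : (r + x) * (r + x) = r + x := by
        rw [add_mul, mul_add, mul_add, hrr, hrx, hxr, hx2]
        abel
      have hex : (r + x) * x = x := by rw [add_mul, hrx, hx2, add_zero]
      have hxe : x * (r + x) = x := by rw [mul_add, hxr, hx2, add_zero]
      have he3 : (r + x) + (r + x) + (r + x) = 0 := by
        have heq : (r + x) + (r + x) + (r + x) = (r + r + r) + (x + x + x) := by abel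
        rw [heq, h3r, h3x, add_zero]
      refine buildDual hx0 h3x hx2 hee hex hxe he3 ?_
      have : r - (r + x) = -x := by abel
      exact hcove (r + x) (this ▸ hAnx)
  -- 3r = x : Z9 with u = x
  · refine Or.inr (Or.inl ?_)
    have h3rz : (3:ℤ) • r = x := by
      rw [show (3:ℤ) = 1 + 1 + 1 by norm_num, add_smul, add_smul, one_smul]; exact h3r
    refine toZ9 r x hx0 hz3x h3rz hrne ?_ ?_
    · rcases hnorm with hb | hb | hb
      · exact Or.inl (sub_eq_zero.mp hb)
      · exact Or.inr (Or.inl (sub_eq_iff_eq_add.mp hb))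
      · exact Or.inr (Or.inr (sub_eq_iff_eq_add.mp hb))
    · exact fun s => hcovR s
  -- 3r = -x : Z9 with u = -x
  · refine Or.inr (Or.inl ?_)
    have h3rz : (3:ℤ) • r = -x := by
      rw [show (3:ℤ) = 1 + 1 + 1 by norm_num, add_smul, add_smul, one_smul]; exact h3r
    have hz3nx : (3:ℤ) • (-x) = 0 := by rw [smul_neg, hz3x, neg_zero]
    have hconv : ∀ s : R, A s → (s = 0 ∨ s = -x ∨ s = - -x) := by
      rintro s (h | h | h) <;> rw [h]
      · exact Or.inl rfl
      · exact Or.inr (Or.inr (neg_neg x).symm)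
      · exact Or.inr (Or.inl rfl)
    refine toZ9 r (-x) (neg_ne_zero.mpr hx0) hz3nx h3rz hrne ?_ ?_
    · rcases hnorm with hb | hb | hb
      · exact Or.inl (sub_eq_zero.mp hb)
      · refine Or.inr (Or.inr ?_)
        rw [neg_neg]
        exact sub_eq_iff_eq_add.mp hb
      · exact Or.inr (Or.inl (sub_eq_iff_eq_add.mp hb))
    · intro s
      rcases hcovR s with h | h | h
      · exact Or.inl (hconv s h)
      · exact Or.inr (Or.inl (hconv _ h))
      · exact Or.inr (Or.inr (hconv _ h))
end Case1

section Case2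
variable {R : Type*} [NonUnitalRing R]

lemma case2_facts (x y : R) (hx0 : x ≠ 0) (hy0 : y ≠ 0) (hne : x ≠ y)
    (h2x : x + x = 0) (hxy : x * y = 0)
    (hcov : ∀ z : R, IsZD z → z = x ∨ z = y) :
    x * x = x ∧ y * y = y ∧ y * x = 0 ∧
      (∀ s : R, s = 0 ∨ s = x ∨ s = y ∨ s = x + y) := by
  have hnegx : -x = x := by rw [neg_eq_iff_add_eq_zero]; exact h2x
  have hzd : ∀ z w : R, z ≠ 0 → w ≠ 0 → (z * w = 0 ∨ w * z = 0) → z = x ∨ z = y :=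
    fun z w hz hw h => hcov z ⟨hz, w, hw, h⟩
  have hs0 : x + y ≠ 0 := by
    intro h
    have : y = -x := eq_neg_of_add_eq_zero_right h
    rw [hnegx] at this
    exact hne this.symm
  have hsx : x + y ≠ x := fun h => hy0 (by rwa [add_eq_left] at h)
  have hsy : x + y ≠ y := fun h => hx0 (by rwa [add_eq_right] at h)
  have hsnot : ∀ w : R, w ≠ 0 → ((x + y) * w = 0 ∨ w * (x + y) = 0) → False := by
    intro w hw h
    rcases hzd _ w hs0 hw h with h' | h'
    exacts [hsx h', hsy h']
  have htxx : x * x = 0 ∨ x * x = x ∨ x * x = y := by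
    by_cases h : x * x = 0
    · exact Or.inl h
    · exact Or.inr (hzd _ y h hy0 (Or.inl (by rw [mul_assoc, hxy, mul_zero])))
  have htyy : y * y = 0 ∨ y * y = x ∨ y * y = y := by
    by_cases h : y * y = 0
    · exact Or.inl h
    · exact Or.inr (hzd _ x h hx0 (Or.inr (by rw [← mul_assoc, hxy, zero_mul])))
  have hxxy : x * x ≠ y := by
    intro h
    have hyy0 : y * y = 0 := by rw [← h, mul_assoc, h, hxy, mul_zero]
    exact hsnot y hy0 (Or.inl (by rw [add_mul, hxy, hyy0, add_zero]))
  have hyyx : y * y ≠ x := by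
    intro h
    have y3 : (y * y) * y = 0 := by rw [h, hxy]
    have xx0 : x * x = 0 := by
      rw [← h, mul_assoc, ← mul_assoc y y y, y3, mul_zero]
    exact hsnot x hx0 (Or.inr (by rw [mul_add, xx0, hxy, add_zero]))
  have hxx : x * x = x := by
    rcases htxx with h | h | h
    · exfalso
      exact hsnot x hx0 (Or.inr (by rw [mul_add, h, hxy, add_zero]))
    · exact h
    · exact absurd h hxxy
  have hyy : y * y = y := by
    rcases htyy with h | h | h
    · exfalso
      exact hsnot y hy0 (Or.inl (by rw [add_mul, hxy, h, add_zero]))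
    · exact absurd h hyyx
    · exact h
  have hyx : y * x = 0 := by
    by_cases h : y * x = 0
    · exact h
    have hcalc : (y * x) * (y * x) = 0 := by
      rw [mul_assoc, ← mul_assoc x y x, hxy, zero_mul, mul_zero]
    rcases hzd (y * x) x h hx0 (Or.inr (by rw [← mul_assoc, hxy, zero_mul])) with h' | h'
    · rw [h', hxx] at hcalc
      exact absurd hcalc hx0
    · rw [h', hyy] at hcalc
      exact absurd hcalc hy0
  refine ⟨hxx, hyy, hyx, ?_⟩
  intro s
  by_cases hs : s = 0
  · exact Or.inl hs
  by_cases hsx' : s = x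
  · exact Or.inr (Or.inl hsx')
  by_cases hsy' : s = y
  · exact Or.inr (Or.inr (Or.inl hsy'))
  refine Or.inr (Or.inr (Or.inr ?_))
  have hnzd : ∀ w : R, w ≠ 0 → (s * w = 0 ∨ w * s = 0) → False := by
    intro w hw h
    rcases hzd s w hs hw h with h' | h'
    exacts [hsx' h', hsy' h']
  have hxs : x * s = x := by
    have hne0 : x * s ≠ 0 := fun h => hnzd x hx0 (Or.inr h)
    rcases hzd (x * s) y hne0 hy0 (Or.inr (by rw [← mul_assoc, hyx, zero_mul])) with h' | h'
    · exact h'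
    · exfalso
      have hid : x * (x * s) = x * s := by rw [← mul_assoc, hxx]
      rw [h', hxy] at hid
      exact hy0 hid.symm
  have hys : y * s = y := by
    have hne0 : y * s ≠ 0 := fun h => hnzd y hy0 (Or.inr h)
    rcases hzd (y * s) x hne0 hx0 (Or.inr (by rw [← mul_assoc, hxy, zero_mul])) with h' | h'
    · exfalso
      have hid : y * (y * s) = y * s := by rw [← mul_assoc, hyy]
      rw [h', hyx] at hid
      exact hx0 hid.symm
    · exact h'
  have hee : (x + y) * (x + y) = x + y := by
    rw [add_mul, mul_add, mul_add, hxx, hxy, hyx, hyy, add_zero, zero_add]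
  have hes : (x + y) * s = x + y := by rw [add_mul, hxs, hys]
  have hkill : (x + y) * (s - (x + y)) = 0 := by rw [mul_sub, hes, hee, sub_self]
  by_cases hzero : s - (x + y) = 0
  · rw [sub_eq_zero] at hzero
    exact hzero
  · exfalso
    exact hsnot (s - (x + y)) hzero (Or.inl hkill)
end Case2


/-- A finite ring has zero-divisor graph `K₂` iff it is isomorphic to one of
`N_{0,3}`, `ℤ₉`, `ℤ₃[x]/(x²)`, `ℤ₂ × ℤ₂`. -/
theorem zdvGraph_eq_K2_iff (R : Type) [NonUnitalRing R] (hfin : Finite R) :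
    Nonempty (zdvGraph R ≃g SimpleGraph.completeGraph (Fin 2)) ↔
      (Nonempty (R ≃+* NullRing (ZMod 3)) ∨
        Nonempty (R ≃+* ZMod 9) ∨
        Nonempty (R ≃+*
          (Polynomial (ZMod 3) ⧸ Ideal.span {(Polynomial.X : Polynomial (ZMod 3)) ^ 2})) ∨
        Nonempty (R ≃+* (ZMod 2 × ZMod 2))) := by
  constructor
  · intro h
    obtain ⟨x, y, hx, hy, hne, hadj, hcov⟩ := iso_to_zdPair h
    have hnegZD : ∀ z : R, IsZD z → IsZD (-z) := by
      rintro z ⟨hz0, w, hw0, hw⟩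
      refine ⟨neg_ne_zero.mpr hz0, w, hw0, ?_⟩
      rcases hw with h' | h'
      · exact Or.inl (by rw [neg_mul, h', neg_zero])
      · exact Or.inr (by rw [mul_neg, h', neg_zero])
    rcases hcov (-x) (hnegZD x hx) with hnx | hnx
    · -- `-x = x` : characteristic 2, Klein four ring
      have h2x : x + x = 0 := neg_eq_iff_add_eq_zero.mp hnx
      rcases hcov (-y) (hnegZD y hy) with hny | hny
      · exfalso
        have hyx : y = -x := by rw [← hny, neg_neg]
        rw [hnx] at hyx
        exact hne hyx.symm
      · have h2y : y + y = 0 := neg_eq_iff_add_eq_zero.mp hny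
        rcases hadj with hxy | hyx
        · obtain ⟨hxx, hyy, hyx0, hcov4⟩ := case2_facts x y hx.1 hy.1 hne h2x hxy hcov
          exact Or.inr (Or.inr (Or.inr
            (build2 hx.1 hy.1 h2x h2y hxx hyy hxy hyx0 hcov4)))
        · have hcov' : ∀ z : R, IsZD z → z = y ∨ z = x := fun z hz => (hcov z hz).symm
          obtain ⟨hyy, hxx, hxy0, hcov4⟩ :=
            case2_facts y x hy.1 hx.1 hne.symm h2y hyx hcov'
          exact Or.inr (Or.inr (Or.inr
            (build2 hy.1 hx.1 h2y h2x hyy hxx hyx hxy0 hcov4)))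
    · -- `-x = y` : case 1
      subst hnx
      have hx2 : x * x = 0 := by
        rcases hadj with h' | h'
        · rwa [mul_neg, neg_eq_zero] at h'
        · rwa [neg_mul, neg_eq_zero] at h'
      have h2x : x + x ≠ 0 := fun h0 => hne (neg_eq_iff_add_eq_zero.mpr h0).symm
      rcases case1 x hx.1 h2x hx2 hcov with h' | h' | h'
      · exact Or.inl h'
      · exact Or.inr (Or.inl h')
      · obtain ⟨e⟩ := h'
        exact Or.inr (Or.inr (Or.inl ⟨e.trans polyQuotEquivDual.symm⟩))
  · rintro (he | he | he | he) <;> obtain ⟨e⟩ := he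
    · exact zdPair_to_iso (zdPair_transfer e zdPair_null)
    · exact zdPair_to_iso (zdPair_transfer e zdPair_zmod9)
    · exact zdPair_to_iso (zdPair_transfer e
        (zdPair_transfer polyQuotEquivDual zdPair_dual))
    · exact zdPair_to_iso (zdPair_transfer e zdPair_z2z2)
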